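/- If (A_1, A_2, A_3, A_4) is an SDS in a finite abelian group 𝒜 of order n with parameters (n; k_1,k_2,k_3,k_4; λ) where λ = k_1+k_2+k_3+k_4-n, then the associated type I ±1 matrices A_i^c satisfy Σ_{i=1}^{4} (A_i^c)ᵀ A_i^c = 4n·I_n. -/

import Mathlib

lemma key1 {G : Type*} [AddCommGroup G] [Fintype G] [DecidableEq G]
    (B : Finset G) (x : G) :
    ∑ z : G, (if x - z ∈ B then (1:ℤ) else 0) = B.card := by
  rw [Finset.sum_boole]
  congr 1
  have : (Finset.univ.filter fun z => x - z ∈ B) = B.image (fun a => x - a) := by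
    ext z
    simp only [Finset.mem_filter, Finset.mem_univ, true_and, Finset.mem_image]
    constructor
    · intro h; exact ⟨x - z, h, by abel⟩
    · rintro ⟨a, ha, rfl⟩; simpa using ha
  rw [this, Finset.card_image_of_injective _ (fun a b h => by
    have := sub_right_injective h; exact this)]

lemma key2 {G : Type*} [AddCommGroup G] [Fintype G] [DecidableEq G]
    (B : Finset G) (x y : G) :
    ∑ z : G, (if x - z ∈ B then (1:ℤ) else 0) * (if y - z ∈ B then 1 else 0)
      = (((B ×ˢ B).filter fun p => p.1 - p.2 = y - x).card : ℤ) := by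
  have : ∀ z : G, (if x - z ∈ B then (1:ℤ) else 0) * (if y - z ∈ B then 1 else 0)
      = if (x - z ∈ B ∧ y - z ∈ B) then 1 else 0 := by
    intro z; by_cases h1 : x - z ∈ B <;> by_cases h2 : y - z ∈ B <;> simp [h1, h2]
  simp only [this]
  rw [Finset.sum_boole]
  congr 1
  refine Finset.card_nbij' (fun z => (y - z, x - z)) (fun p => x - p.2) ?_ ?_ ?_ ?_
  · intro z hz
    simp only [Finset.mem_coe, Finset.mem_filter, Finset.mem_univ, true_and] at hz
    simp only [Finset.mem_coe, Finset.mem_filter, Finset.mem_product]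
    exact ⟨⟨hz.2, hz.1⟩, by abel⟩
  · intro p hp
    simp only [Finset.mem_coe, Finset.mem_filter, Finset.mem_product] at hp
    simp only [Finset.mem_coe, Finset.mem_filter, Finset.mem_univ, true_and]
    constructor
    · simpa using hp.1.2
    · have : y - (x - p.2) = p.1 := by
        have := hp.2; rw [sub_eq_iff_eq_add] at this
        rw [this]; abel
      rw [this]; exact hp.1.1
  · intro z _; simp
  · intro p hp
    simp only [Finset.mem_coe, Finset.mem_filter, Finset.mem_product] at hp
    have h1 : y - (x - p.2) = p.1 := by
      have := hp.2; rw [sub_eq_iff_eq_add] at this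
      rw [this]; abel
    have h2 : x - (x - p.2) = p.2 := by abel
    simp [h1, h2]

lemma key3 {G : Type*} [AddCommGroup G] [DecidableEq G] (B : Finset G) :
    ((B ×ˢ B).filter fun p => p.1 - p.2 = 0).card = B.card := by
  have : ((B ×ˢ B).filter fun p => p.1 - p.2 = 0) = B.image (fun a => (a, a)) := by
    ext p
    simp only [Finset.mem_filter, Finset.mem_product, Finset.mem_image, sub_eq_zero]
    constructor
    · rintro ⟨⟨h1, h2⟩, h3⟩; exact ⟨p.1, h1, by simp [Prod.ext_iff, h3]⟩
    · rintro ⟨a, ha, rfl⟩; exact ⟨⟨ha, ha⟩, rfl⟩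
  rw [this, Finset.card_image_of_injective _ (fun a b h => by simpa using congrArg Prod.fst h)]

/-- If (A₁,...,A₄) is an SDS with parameters (n; k₁,...,k₄; λ) where
λ = k₁+k₂+k₃+k₄-n, then the associated type I ±1 matrices Aᵢᶜ, defined by
(Aᵢᶜ)_{x,y} = 1 - 2χ_{Aᵢ}(y-x), satisfy ∑ᵢ (Aᵢᶜ)ᵀ Aᵢᶜ = 4n·Iₙ. -/
theorem stmt8 {G : Type*} [AddCommGroup G] [Fintype G] [DecidableEq G]
    (n lam : ℕ) (hn : Fintype.card G = n)
    (A : Fin 4 → Finset G) (k : Fin 4 → ℕ)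
    (hk : ∀ i, (A i).card = k i)
    (hSDS : ∀ a : G, a ≠ 0 →
      (∑ i, ((A i ×ˢ A i).filter (fun p => p.1 - p.2 = a)).card) = lam)
    (hlam : (lam : ℤ) = (k 0 : ℤ) + k 1 + k 2 + k 3 - n)
    (Ac : Fin 4 → Matrix G G ℤ)
    (hAc : ∀ i x y, Ac i x y = 1 - 2 * (if y - x ∈ A i then 1 else 0)) :
    ∑ i, (Ac i).transpose * Ac i = (4 * n : ℤ) • (1 : Matrix G G ℤ) := by
  ext x y
  have inner : ∀ i, ∑ z : G, (Ac i).transpose x z * Ac i z y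
      = (n : ℤ) - 4 * k i
        + 4 * ((((A i) ×ˢ (A i)).filter fun p => p.1 - p.2 = y - x).card : ℤ) := by
    intro i
    have e : ∀ z : G, (Ac i).transpose x z * Ac i z y
        = 1 - 2 * (if x - z ∈ A i then (1:ℤ) else 0) - 2 * (if y - z ∈ A i then (1:ℤ) else 0)
          + 4 * ((if x - z ∈ A i then (1:ℤ) else 0) * (if y - z ∈ A i then 1 else 0)) := by
      intro z
      rw [Matrix.transpose_apply, hAc, hAc]
      ring
    simp only [e, Finset.sum_add_distrib, Finset.sum_sub_distrib, ← Finset.mul_sum,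
      key1, key2, Finset.sum_const, Finset.card_univ, hn, nsmul_eq_mul, mul_one, hk]
    ring
  rw [Matrix.sum_apply]
  simp only [Matrix.mul_apply, inner, Matrix.smul_apply, Matrix.one_apply, smul_eq_mul]
  by_cases hxy : x = y
  · subst hxy
    simp only [sub_self, key3, hk, if_pos rfl, mul_one]
    rw [Fin.sum_univ_four]
    norm_num
    ring
  · have hne : y - x ≠ 0 := sub_ne_zero.mpr (Ne.symm hxy)
    have hs := hSDS (y - x) hne
    rw [if_neg hxy, mul_zero]
    rw [Fin.sum_univ_four]
    have hs' : ((((A 0 ×ˢ A 0).filter fun p => p.1 - p.2 = y - x).card : ℤ)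
        + (((A 1 ×ˢ A 1).filter fun p => p.1 - p.2 = y - x).card : ℤ)
        + (((A 2 ×ˢ A 2).filter fun p => p.1 - p.2 = y - x).card : ℤ)
        + (((A 3 ×ˢ A 3).filter fun p => p.1 - p.2 = y - x).card : ℤ)) = (lam : ℤ) := by
      rw [Fin.sum_univ_four] at hs
      exact_mod_cast congrArg (Nat.cast : ℕ → ℤ) hs
    rw [hlam] at hs'
    linarith [hs']
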